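/- Let α be a real number with 0 < α < 1 and set δ = −ln α. Then the series Σ_{k=1}^{∞} α^(√k) converges, and for every integer m ≥ 2 one has Σ_{k=m}^{∞} α^(√k) ≤ (2/δ²)·(1 + δ·√(m−1))·α^(√(m−1)). -/

import Mathlib

noncomputable def Ff (δ x : ℝ) : ℝ :=
  -(2 / δ ^ 2) * ((1 + δ * Real.sqrt x) * Real.exp (-(δ * Real.sqrt x)))

lemma Ff_hasDerivAt (δ : ℝ) {x : ℝ} (hδ : 0 < δ) (hx : 0 < x) :
    HasDerivAt (Ff δ) (Real.exp (-(δ * Real.sqrt x))) x := by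
  have hs : Real.sqrt x ≠ 0 := by positivity
  have h1 : HasDerivAt (fun y => δ * Real.sqrt y) (δ * (1 / (2 * Real.sqrt x))) x :=
    (Real.hasDerivAt_sqrt hx.ne').const_mul δ
  have h2 : HasDerivAt (fun y => Real.exp (-(δ * Real.sqrt y)))
      (Real.exp (-(δ * Real.sqrt x)) * (-(δ * (1 / (2 * Real.sqrt x))))) x := h1.neg.exp
  have h3 : HasDerivAt (fun y => 1 + δ * Real.sqrt y) (δ * (1 / (2 * Real.sqrt x))) x :=
    h1.const_add 1
  have h4 := (h3.mul h2).const_mul (-(2 / δ ^ 2))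
  refine HasDerivAt.congr_deriv (f := Ff δ) h4 ?_
  field_simp
  ring

lemma Ff_cont (δ : ℝ) : Continuous (Ff δ) := by
  unfold Ff; fun_prop

lemma Ff_nonpos (δ : ℝ) (hδ : 0 < δ) (x : ℝ) : Ff δ x ≤ 0 := by
  unfold Ff
  have h1 : (0:ℝ) ≤ 1 + δ * Real.sqrt x := by positivity
  have h2 : (0:ℝ) < Real.exp (-(δ * Real.sqrt x)) := Real.exp_pos _
  have h3 : (0:ℝ) < 2 / δ ^ 2 := by positivity
  have h4 : (0:ℝ) ≤ (2 / δ ^ 2) * ((1 + δ * Real.sqrt x) * Real.exp (-(δ * Real.sqrt x))) := by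
    positivity
  linarith

lemma key (δ : ℝ) (hδ : 0 < δ) {a : ℝ} (ha : 0 ≤ a) :
    Real.exp (-(δ * Real.sqrt (a + 1))) ≤ Ff δ (a + 1) - Ff δ a := by
  set c := Real.exp (-(δ * Real.sqrt (a + 1))) with hc
  set g : ℝ → ℝ := fun x => Ff δ x - x * c with hg
  have hderiv : ∀ x ∈ Set.Ioo a (a + 1),
      HasDerivAt g (Real.exp (-(δ * Real.sqrt x)) - c) x := by
    intro x hx
    exact (Ff_hasDerivAt δ hδ (lt_of_le_of_lt ha hx.1)).sub (hasDerivAt_mul_const c)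
  have mono : MonotoneOn g (Set.Icc a (a + 1)) := by
    apply monotoneOn_of_deriv_nonneg (convex_Icc _ _)
    · exact ((Ff_cont δ).sub (continuous_id.mul continuous_const)).continuousOn
    · rw [interior_Icc]
      intro x hx
      exact (hderiv x hx).differentiableAt.differentiableWithinAt
    · rw [interior_Icc]
      intro x hx
      rw [(hderiv x hx).deriv]
      have hx0 : 0 ≤ x := le_trans ha hx.1.le
      have : Real.sqrt x ≤ Real.sqrt (a + 1) := Real.sqrt_le_sqrt hx.2.le
      have : -(δ * Real.sqrt (a + 1)) ≤ -(δ * Real.sqrt x) := by nlinarith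
      have := Real.exp_le_exp.mpr this
      linarith
  have h := mono (Set.left_mem_Icc.mpr (by linarith)) (Set.right_mem_Icc.mpr (by linarith))
    (by linarith : a ≤ a + 1)
  simp only [hg] at h
  linarith

lemma sumle (δ : ℝ) (hδ : 0 < δ) {a : ℝ} (ha : 0 ≤ a) (N : ℕ) :
    ∑ k ∈ Finset.range N, Real.exp (-(δ * Real.sqrt (a + k + 1))) ≤ -Ff δ a := by
  have main : ∑ k ∈ Finset.range N, Real.exp (-(δ * Real.sqrt (a + k + 1)))
      ≤ Ff δ (a + N) - Ff δ a := by
    induction N with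
    | zero => simp
    | succ n ih =>
      rw [Finset.sum_range_succ]
      have hk := key δ hδ (a := a + n) (by positivity)
      push_cast
      ring_nf at hk ih ⊢
      have heq : ∑ x ∈ Finset.range n, Real.exp (-(δ * Real.sqrt (a + ↑x + 1)))
          = ∑ x ∈ Finset.range n, Real.exp (-(δ * Real.sqrt (1 + a + ↑x))) := by
        apply Finset.sum_congr rfl
        intro x _
        ring_nf
      linarith
  have := Ff_nonpos δ hδ (a + N)
  linarith

theorem stmt_9 (α : ℝ) (hα0 : 0 < α) (hα1 : α < 1) :
    Summable (fun k : ℕ => α ^ Real.sqrt k) ∧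
    ∀ m : ℕ, 2 ≤ m →
      ∑' k : ℕ, α ^ Real.sqrt (m + k : ℕ) ≤
        (2 / (-Real.log α) ^ 2) * (1 + (-Real.log α) * Real.sqrt ((m : ℝ) - 1)) *
          α ^ Real.sqrt ((m : ℝ) - 1) := by
  set δ : ℝ := -Real.log α with hδdef
  have hδ : 0 < δ := neg_pos.mpr (Real.log_neg hα0 hα1)
  have hexp : ∀ t : ℝ, α ^ t = Real.exp (-(δ * t)) := by
    intro t
    rw [Real.rpow_def_of_pos hα0]
    congr 1
    rw [hδdef]; ring
  have hsum : Summable (fun k : ℕ => α ^ Real.sqrt k) := by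
    apply summable_of_sum_range_le (c := 1 + -Ff δ 0)
    · intro k; positivity
    · intro n
      have hFf0 := Ff_nonpos δ hδ 0
      cases n with
      | zero => simp; linarith
      | succ n =>
        rw [Finset.sum_range_succ']
        have e0 : α ^ Real.sqrt (0:ℝ) = 1 := by
          rw [Real.sqrt_zero, Real.rpow_zero]
        have hb : ∑ i ∈ Finset.range n, α ^ Real.sqrt ((i + 1 : ℕ) : ℝ)
            ≤ -Ff δ 0 := by
          have := sumle δ hδ (a := 0) le_rfl n
          calc ∑ i ∈ Finset.range n, α ^ Real.sqrt ((i + 1 : ℕ) : ℝ)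
              = ∑ i ∈ Finset.range n, Real.exp (-(δ * Real.sqrt (0 + i + 1))) := by
                apply Finset.sum_congr rfl
                intro i _
                rw [hexp]
                push_cast
                ring_nf
            _ ≤ -Ff δ 0 := this
        push_cast at hb ⊢
        linarith [hb, e0.le, e0.ge]
  refine ⟨hsum, ?_⟩
  intro m hm
  set a : ℝ := (m : ℝ) - 1 with hadef
  have ha : 0 ≤ a := by
    have : (2:ℝ) ≤ m := by exact_mod_cast hm
    simp only [hadef]; linarith
  have hsumf : Summable (fun k : ℕ => α ^ Real.sqrt ((m + k : ℕ) : ℝ)) :=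
    hsum.comp_injective (add_right_injective m)
  have hbound : ∀ n : ℕ, ∑ k ∈ Finset.range n, α ^ Real.sqrt ((m + k : ℕ) : ℝ) ≤ -Ff δ a := by
    intro n
    have := sumle δ hδ ha n
    calc ∑ k ∈ Finset.range n, α ^ Real.sqrt ((m + k : ℕ) : ℝ)
        = ∑ k ∈ Finset.range n, Real.exp (-(δ * Real.sqrt (a + k + 1))) := by
          apply Finset.sum_congr rfl
          intro k _
          rw [hexp]
          congr 3
          simp only [hadef]
          push_cast
          ring
      _ ≤ -Ff δ a := this
  have hle := Summable.tsum_le_of_sum_range_le hsumf hbound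
  refine le_trans hle ?_
  rw [hexp (Real.sqrt a)]
  unfold Ff
  ring_nf
  exact le_rfl
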